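/- Let θ' ∈ L be another generator of L as a k-algebra, and let P_{θ'} ∈ k[t] be the characteristic polynomial of the k-linear endomorphism of L given by multiplication by θ' (so P_θ = f is that of θ). Then f'(θ) and P'_{θ'}(θ') are units of L, the powers (1, θ', …, θ'^{n−1}) form a k-basis of L, and, denoting by θ'^*_{n−1} the functional picking out the coefficient of θ'^{n−1} in that basis, one has t_{θ'}(x, y) = t_θ( f'(θ)·P'_{θ'}(θ')^{−1}·x, y) for all x, y ∈ L, where t_{θ'}(x, y) := θ'^*_{n−1}(x·y). -/

import Mathlib

open Polynomial Module

section Key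

variable {k A : Type*} [Field k] [CommRing A] [Algebra k A]

/-- the coefficients of `g(X)/(X-θ)` -/
noncomputable def ddd (g : k[X]) (θ : A) (n : ℕ) (i : ℕ) : A :=
  ∑ r ∈ Finset.range (n - i), algebraMap k A (g.coeff (i + 1 + r)) * θ ^ r

lemma ddd_rec (g : k[X]) (θ : A) {n i : ℕ} (hi : i < n) :
    θ * ddd g θ n (i + 1) + algebraMap k A (g.coeff (i + 1)) = ddd g θ n i := by
  have h : n - i = (n - (i + 1)) + 1 := by omega
  rw [ddd, ddd, h, Finset.sum_range_succ']
  simp only [Finset.mul_sum, pow_zero, mul_one]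
  ring_nf

lemma ddd_mul_zero (g : k[X]) (θ : A) {n : ℕ} (hdeg : g.natDegree = n)
    (hroot : aeval θ g = 0) : θ * ddd g θ n 0 = -algebraMap k A (g.coeff 0) := by
  have h := aeval_eq_sum_range (p := g) θ
  rw [hdeg, Finset.sum_range_succ', hroot] at h
  simp only [pow_zero, smul_eq_mul, mul_one, Algebra.smul_def] at h
  have : θ * ddd g θ n 0 = ∑ i ∈ Finset.range n, algebraMap k A (g.coeff (i + 1)) * θ ^ (i + 1) := by
    rw [ddd, Finset.mul_sum]
    refine Finset.sum_congr (by simp) fun r hr => by ring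
  rw [this]
  linear_combination -h

end Key
section Key2

variable {k A : Type*} [Field k] [CommRing A] [Algebra k A]

/-- the polynomial `g(X)/(X-θ)` -/
noncomputable def DDD (g : k[X]) (θ : A) (n : ℕ) : A[X] :=
  ∑ i ∈ Finset.range n, C (ddd g θ n i) * X ^ i

lemma ddd_of_ge (g : k[X]) (θ : A) {n i : ℕ} (h : n ≤ i) : ddd g θ n i = 0 := by
  rw [ddd, Nat.sub_eq_zero_of_le h]; simp

lemma DDD_coeff (g : k[X]) (θ : A) (n : ℕ) (m : ℕ) : (DDD g θ n).coeff m = ddd g θ n m := by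
  rw [DDD, finset_sum_coeff]
  simp only [coeff_C_mul, coeff_X_pow, mul_ite, mul_one, mul_zero]
  simp only [eq_comm (a := m)]
  rw [Finset.sum_ite_eq' (Finset.range n) m (fun i => ddd g θ n i)]
  split_ifs with h
  · rfl
  · rw [ddd_of_ge g θ (by simpa using h)]

lemma DDD_spec (g : k[X]) (θ : A) {n : ℕ} (hdeg : g.natDegree = n)
    (hroot : aeval θ g = 0) :
    DDD g θ n * (X - C θ) = g.map (algebraMap k A) := by
  ext m
  cases m with
  | zero =>
    rw [mul_coeff_zero]
    simp only [coeff_sub, coeff_X_zero, coeff_C, if_pos rfl, zero_sub, mul_neg, DDD_coeff,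
      coeff_map]
    rw [if_pos trivial, mul_comm, ddd_mul_zero g θ hdeg hroot]
    simp
  | succ m =>
    rw [coeff_mul_X_sub_C, DDD_coeff, DDD_coeff, coeff_map]
    rcases lt_or_ge m n with h | h
    · rw [← ddd_rec g θ h]; ring
    · rw [ddd_of_ge g θ h, ddd_of_ge g θ (by omega), coeff_eq_zero_of_natDegree_lt (by omega)]
      simp

lemma DDD_eval (g : k[X]) (θ : A) {n : ℕ} (hdeg : g.natDegree = n)
    (hroot : aeval θ g = 0) :
    (DDD g θ n).eval θ = aeval θ (derivative g) := by
  have h := congrArg derivative (DDD_spec g θ hdeg hroot)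
  rw [derivative_mul, derivative_map] at h
  have h2 := congrArg (Polynomial.eval θ) h
  simp only [derivative_sub, derivative_X, derivative_C, sub_zero, mul_one, eval_add, eval_mul,
    eval_sub, eval_X, eval_C, sub_self, mul_zero, zero_add, eval_map] at h2
  rw [h2, aeval_def]

lemma DDD_eval_eq_sum (g : k[X]) (θ : A) (n : ℕ) :
    (DDD g θ n).eval θ = ∑ i ∈ Finset.range n, ddd g θ n i * θ ^ i := by
  rw [DDD, eval_finset_sum]
  simp

end Key2
section Key3

variable {k A : Type*} [Field k] [CommRing A] [Algebra k A]
variable {n : ℕ} (hn : 1 ≤ n) (θ : A) {g : Polynomial k} (hg : g.Monic)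
  (hdeg : g.natDegree = n) (hroot : aeval θ g = 0)
  (ct : A →ₗ[k] k) (h1 : ct (θ ^ (n - 1)) = 1)
  (h0 : ∀ i : ℕ, i < n - 1 → ct (θ ^ i) = 0)

include hn h1 h0 in
lemma ct_pow (m : ℕ) (hm : m ≤ n - 1) : ct (θ ^ m) = if m = n - 1 then 1 else 0 := by
  rcases eq_or_lt_of_le hm with h | h
  · rw [if_pos h, h, h1]
  · rw [if_neg (by omega), h0 m h]

include hn hg hdeg hroot h1 h0 in
lemma ct_pow_mul_ddd : ∀ m, m < n → ∀ i, i < n →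
    ct (θ ^ m * ddd g θ n i) = if i = m then 1 else 0 := by
  intro m
  induction m with
  | zero =>
    intro _ i hi
    rw [pow_zero, one_mul, ddd, map_sum]
    have : ∀ r ∈ Finset.range (n - i),
        ct (algebraMap k A (g.coeff (i + 1 + r)) * θ ^ r)
          = g.coeff (i + 1 + r) * (if r = n - 1 then 1 else 0) := by
      intro r hr
      rw [← Algebra.smul_def, map_smul, smul_eq_mul,
        ct_pow hn θ ct h1 h0 r (by simp at hr; omega)]
    rw [Finset.sum_congr rfl this]
    simp only [mul_ite, mul_one, mul_zero, Finset.sum_ite_eq' (Finset.range (n - i))]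
    rcases Nat.eq_zero_or_pos i with h | h
    · subst h
      rw [if_pos (by simp; omega), if_pos rfl]
      have e : 0 + 1 + (n - 1) = n := by omega
      rw [e, ← hdeg, ← Polynomial.Monic.leadingCoeff hg, Polynomial.leadingCoeff, hdeg]
    · rw [if_neg (by simp; omega), if_neg (by omega)]
  | succ m ih =>
    intro hm i hi
    have hmle : ct (θ ^ m) = 0 := h0 m (by omega)
    cases i with
    | zero =>
      have e : θ ^ (m + 1) * ddd g θ n 0 = θ ^ m * (θ * ddd g θ n 0) := by ring
      rw [e, ddd_mul_zero g θ hdeg hroot, if_neg (by omega)]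
      have e2 : θ ^ m * -algebraMap k A (g.coeff 0) = (-(g.coeff 0)) • θ ^ m := by
        rw [Algebra.smul_def, map_neg]; ring
      rw [e2, map_smul, smul_eq_mul, hmle, mul_zero]
    | succ j =>
      have e : θ ^ (m + 1) * ddd g θ n (j + 1)
          = θ ^ m * ddd g θ n j - (g.coeff (j + 1)) • θ ^ m := by
        rw [Algebra.smul_def, ← ddd_rec g θ (show j < n by omega)]; ring
      rw [e, map_sub, map_smul, smul_eq_mul, hmle, mul_zero, sub_zero,
        ih (by omega) j (by omega)]
      simp

end Key3

section Key4

variable {k A : Type*} [Field k] [CommRing A] [Algebra k A]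
variable {n : ℕ} (hn : 1 ≤ n) (θ : A) {g : Polynomial k} (hg : g.Monic)
  (hdeg : g.natDegree = n) (hroot : aeval θ g = 0)
  (b : Basis (Fin n) k A) (hb : ∀ i : Fin n, b i = θ ^ (i : ℕ))
  (ct : A →ₗ[k] k) (h1 : ct (θ ^ (n - 1)) = 1)
  (h0 : ∀ i : ℕ, i < n - 1 → ct (θ ^ i) = 0)

include hn hg hdeg hroot hb h1 h0 in
lemma repr_eq_ct (w : A) (i : Fin n) : b.repr w i = ct (ddd g θ n (i : ℕ) * w) := by
  have key : ((Finsupp.lapply i).comp (b.repr : A →ₗ[k] (Fin n →₀ k)))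
      = ct.comp (LinearMap.mulLeft k (ddd g θ n (i : ℕ))) := by
    apply b.ext
    intro j
    have L : ((Finsupp.lapply i).comp (b.repr : A →ₗ[k] (Fin n →₀ k))) (b j)
        = if j = i then (1 : k) else 0 := by
      simp [Finsupp.single_apply]
    have R : (ct.comp (LinearMap.mulLeft k (ddd g θ n (i : ℕ)))) (b j)
        = if (i : ℕ) = (j : ℕ) then (1 : k) else 0 := by
      simp only [LinearMap.comp_apply, LinearMap.mulLeft_apply, hb j]
      rw [mul_comm, ct_pow_mul_ddd hn θ hg hdeg hroot ct h1 h0 (j : ℕ) j.isLt (i : ℕ) i.isLt]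
    rw [L, R]
    simp only [Fin.val_eq_val]
    by_cases h : j = i
    · rw [if_pos h, if_pos h.symm]
    · rw [if_neg h, if_neg (Ne.symm h)]
  exact congrFun (congrArg DFunLike.coe key) w

include hn hg hdeg hroot hb h1 h0 in
lemma ct_nondeg (w : A) (hw : ∀ z : A, ct (w * z) = 0) : w = 0 := by
  have : b.repr w = 0 := by
    ext i
    rw [repr_eq_ct hn θ hg hdeg hroot b hb ct h1 h0 w i, mul_comm, hw]
    rfl
  simpa using (b.repr.map_eq_zero_iff).mp this

include hn hg hdeg hroot hb h1 h0 in
lemma trace_mulLeft_eq_ct (z : A) :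
    LinearMap.trace k A (LinearMap.mulLeft k z) = ct (aeval θ (derivative g) * z) := by
  classical
  rw [LinearMap.trace_eq_matrix_trace k b, Matrix.trace]
  have hdiag : ∀ i : Fin n, Matrix.diag (LinearMap.toMatrix b b (LinearMap.mulLeft k z)) i
      = ct ((ddd g θ n (i : ℕ) * θ ^ (i : ℕ)) * z) := by
    intro i
    rw [Matrix.diag_apply, LinearMap.toMatrix_apply,
      repr_eq_ct hn θ hg hdeg hroot b hb ct h1 h0, LinearMap.mulLeft_apply, hb i]
    ring_nf
  rw [Finset.sum_congr rfl (fun i _ => hdiag i), ← map_sum]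
  congr 1
  rw [← DDD_eval g θ hdeg hroot, DDD_eval_eq_sum, Finset.sum_mul]
  rw [← (Finset.sum_bij (fun (i : Fin n) _ => (i : ℕ)) (fun i _ => Finset.mem_range.mpr i.isLt)
    (fun a _ a' _ h => Fin.ext h) (fun m hm => ⟨⟨m, Finset.mem_range.mp hm⟩, Finset.mem_univ _, rfl⟩)
    (fun i _ => rfl))]

end Key4

set_option maxHeartbeats 1000000 in
open Polynomial Module in
theorem stmt_9 (k : Type*) [Field k] (f : Polynomial k) (hf : f.Monic)
    (hsep : f.Separable) (hn : 1 ≤ f.natDegree)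
    [Module.Finite k (AdjoinRoot f)]
    (coeffTop : AdjoinRoot f →ₗ[k] k)
    (hct1 : coeffTop (AdjoinRoot.root f ^ (f.natDegree - 1)) = 1)
    (hct0 : ∀ i : ℕ, i < f.natDegree - 1 → coeffTop (AdjoinRoot.root f ^ i) = 0)
    (θ' : AdjoinRoot f) (hgen : Algebra.adjoin k {θ'} = ⊤)
    (P' : Polynomial k) (hP' : P' = LinearMap.charpoly (LinearMap.mulLeft k θ')) :
    IsUnit (Polynomial.aeval (AdjoinRoot.root f) (Polynomial.derivative f)) ∧
    IsUnit (Polynomial.aeval θ' (Polynomial.derivative P')) ∧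
    (LinearIndependent k (fun i : Fin f.natDegree => θ' ^ (i : ℕ)) ∧
      Submodule.span k (Set.range fun i : Fin f.natDegree => θ' ^ (i : ℕ)) = ⊤) ∧
    ∀ coeffTop' : AdjoinRoot f →ₗ[k] k,
      coeffTop' (θ' ^ (f.natDegree - 1)) = 1 →
      (∀ i : ℕ, i < f.natDegree - 1 → coeffTop' (θ' ^ i) = 0) →
      ∀ x y : AdjoinRoot f,
        coeffTop' (x * y) =
          coeffTop (Polynomial.aeval (AdjoinRoot.root f) (Polynomial.derivative f) *
            Ring.inverse (Polynomial.aeval θ' (Polynomial.derivative P')) * x * y) := by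
  classical
  -- basic facts about `f` and `θ`
  have hrootf : aeval (AdjoinRoot.root f) f = 0 := by
    rw [AdjoinRoot.aeval_eq, AdjoinRoot.mk_self]
  have hb : ∀ i : Fin f.natDegree,
      (AdjoinRoot.powerBasis' hf).basis i = (AdjoinRoot.root f) ^ (i : ℕ) := by
    intro i; rw [PowerBasis.coe_basis]; rfl
  have hfinrank : finrank k (AdjoinRoot f) = f.natDegree := by
    rw [Module.finrank_eq_card_basis (AdjoinRoot.powerBasis' hf).basis, Fintype.card_fin]; rfl
  have hnontriv : Nontrivial (AdjoinRoot f) := by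
    refine AdjoinRoot.nontrivial f ?_
    rw [Polynomial.degree_eq_natDegree hf.ne_zero]
    simp only [ne_eq, Nat.cast_eq_zero]
    omega
  -- `f'(θ)` is a unit
  obtain ⟨a, c, hac⟩ := hsep
  have hfθ : aeval (AdjoinRoot.root f) c * aeval (AdjoinRoot.root f) (derivative f) = 1 := by
    have := congrArg (aeval (AdjoinRoot.root f)) hac
    simp only [map_add, map_mul, hrootf, mul_zero, zero_add, map_one] at this
    linear_combination this
  have hfθunit : IsUnit (aeval (AdjoinRoot.root f) (derivative f)) :=
    IsUnit.of_mul_eq_one _ (by rw [mul_comm]; exact hfθ)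
  -- facts about `P'` and `θ'`
  have hP'monic : P'.Monic := hP' ▸ LinearMap.charpoly_monic _
  have hP'deg : P'.natDegree = f.natDegree := by
    rw [hP', LinearMap.charpoly_natDegree _, hfinrank]
  have hrootP' : aeval θ' P' = 0 := by
    have h0 : LinearMap.mulLeft k θ' = Algebra.lmul k (AdjoinRoot f) θ' := by ext x; simp
    have h2 : (Algebra.lmul k (AdjoinRoot f)) (aeval θ' P') = 0 := by
      rw [← Polynomial.aeval_algHom_apply, ← h0, hP']
      exact LinearMap.aeval_self_charpoly _
    have := congrArg (fun (m : Module.End k (AdjoinRoot f)) => m 1) h2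
    simpa using this
  -- span of powers of `θ'`
  have hθn : θ' ^ f.natDegree = -∑ i ∈ Finset.range f.natDegree, P'.coeff i • θ' ^ i := by
    have h := aeval_eq_sum_range (p := P') θ'
    rw [hP'deg, Finset.sum_range_succ, hrootP'] at h
    have hlc : P'.coeff f.natDegree = 1 := by
      rw [← hP'deg, ← Polynomial.Monic.leadingCoeff hP'monic]; rfl
    rw [hlc, one_smul] at h
    linear_combination -h
  have hspan : ∀ m : ℕ,
      θ' ^ m ∈ Submodule.span k (Set.range fun i : Fin f.natDegree => θ' ^ (i : ℕ)) := by
    intro m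
    induction m using Nat.strong_induction_on with
    | _ m ih =>
      rcases lt_or_ge m f.natDegree with h | h
      · exact Submodule.subset_span ⟨⟨m, h⟩, rfl⟩
      · have e : θ' ^ m
            = -∑ i ∈ Finset.range f.natDegree, P'.coeff i • θ' ^ (m - f.natDegree + i) := by
          have e1 : θ' ^ m = θ' ^ (m - f.natDegree) * θ' ^ f.natDegree := by
            rw [← pow_add]; congr 1; omega
          rw [e1, hθn, mul_neg, Finset.mul_sum]
          congr 1
          refine Finset.sum_congr rfl fun i hi => ?_
          rw [mul_smul_comm, ← pow_add]
        rw [e]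
        refine neg_mem (Submodule.sum_mem _ fun i hi => Submodule.smul_mem _ _ ?_)
        simp only [Finset.mem_range] at hi
        exact ih _ (by omega)
  have hS : Submodule.span k (Set.range fun i : Fin f.natDegree => θ' ^ (i : ℕ)) = ⊤ := by
    refine le_antisymm le_top ?_
    intro x _
    have hx : x ∈ Algebra.adjoin k {θ'} := by rw [hgen]; trivial
    rw [Algebra.adjoin_singleton_eq_range_aeval] at hx
    obtain ⟨q, hq⟩ := hx
    rw [← hq]
    show (aeval θ' q : AdjoinRoot f) ∈ _
    rw [aeval_eq_sum_range θ']
    exact Submodule.sum_mem _ fun i _ => Submodule.smul_mem _ _ (hspan i)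
  have hli : LinearIndependent k (fun i : Fin f.natDegree => θ' ^ (i : ℕ)) :=
    linearIndependent_of_top_le_span_of_card_eq_finrank hS.ge
      (by rw [Fintype.card_fin, hfinrank])
  -- the coordinate functional for `θ'`
  set b' : Basis (Fin f.natDegree) k (AdjoinRoot f) := Basis.mk hli hS.ge with hb'def
  have hb' : ∀ i : Fin f.natDegree, b' i = θ' ^ (i : ℕ) :=
    fun i => by rw [hb'def, Basis.mk_apply]
  have hct0pow : ∀ i : Fin f.natDegree,
      b'.coord ⟨f.natDegree - 1, by omega⟩ (θ' ^ (i : ℕ))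
        = if (i : ℕ) = f.natDegree - 1 then 1 else 0 := by
    intro i
    rw [← hb' i, Basis.coord_apply, Basis.repr_self, Finsupp.single_apply]
    by_cases h : (i : ℕ) = f.natDegree - 1
    · rw [if_pos h, if_pos (Fin.ext (by simpa using h))]
    · rw [if_neg h, if_neg (fun hh => h (by simpa using (Fin.ext_iff.mp hh)))]
  have hct0' : ∀ i : ℕ, i < f.natDegree - 1 →
      b'.coord ⟨f.natDegree - 1, by omega⟩ (θ' ^ i) = 0 := by
    intro i hi
    have h := hct0pow ⟨i, by omega⟩
    rw [show ((⟨i, by omega⟩ : Fin f.natDegree) : ℕ) = i from rfl] at h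
    rw [h, if_neg (by omega)]
  have hct01 : b'.coord ⟨f.natDegree - 1, by omega⟩ (θ' ^ (f.natDegree - 1)) = 1 := by
    have h := hct0pow ⟨f.natDegree - 1, by omega⟩
    rw [show ((⟨f.natDegree - 1, by omega⟩ : Fin f.natDegree) : ℕ) = f.natDegree - 1
      from rfl] at h
    rw [h, if_pos rfl]
  -- trace identities
  have htrθ : ∀ z : AdjoinRoot f, LinearMap.trace k (AdjoinRoot f) (LinearMap.mulLeft k z)
      = coeffTop (aeval (AdjoinRoot.root f) (derivative f) * z) :=
    fun z => trace_mulLeft_eq_ct hn (AdjoinRoot.root f) hf rfl hrootf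
      (AdjoinRoot.powerBasis' hf).basis hb coeffTop hct1 hct0 z
  have htrθ' : ∀ z : AdjoinRoot f, LinearMap.trace k (AdjoinRoot f) (LinearMap.mulLeft k z)
      = b'.coord ⟨f.natDegree - 1, by omega⟩ (aeval θ' (derivative P') * z) :=
    fun z => trace_mulLeft_eq_ct hn θ' hP'monic hP'deg hrootP' b' hb' _ hct01 hct0' z
  -- `P''(θ')` is a unit
  have hvinj : Function.Injective (LinearMap.mulLeft k (aeval θ' (derivative P'))) := by
    rw [← LinearMap.ker_eq_bot, LinearMap.ker_eq_bot']
    intro z hz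
    simp only [LinearMap.mulLeft_apply] at hz
    have hfz : aeval (AdjoinRoot.root f) (derivative f) * z = 0 := by
      refine ct_nondeg hn (AdjoinRoot.root f) hf rfl hrootf
        (AdjoinRoot.powerBasis' hf).basis hb coeffTop hct1 hct0 _ fun w => ?_
      have h3 := (htrθ (z * w)).symm.trans (htrθ' (z * w))
      rw [show aeval (AdjoinRoot.root f) (derivative f) * z * w
        = aeval (AdjoinRoot.root f) (derivative f) * (z * w) by ring, h3,
        show aeval θ' (derivative P') * (z * w) = (aeval θ' (derivative P') * z) * w by ring,
        hz, zero_mul, map_zero]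
    have hz0 : z = 0 := hfθunit.mul_right_eq_zero.mp hfz
    exact hz0
  have hvsurj := (LinearMap.injective_iff_surjective
    (f := LinearMap.mulLeft k (aeval θ' (derivative P')))).mp hvinj
  obtain ⟨u, hu⟩ := hvsurj 1
  simp only [LinearMap.mulLeft_apply] at hu
  have hvunit : IsUnit (aeval θ' (derivative P')) := IsUnit.of_mul_eq_one _ hu
  refine ⟨hfθunit, hvunit, ⟨hli, hS⟩, ?_⟩
  -- the final identity
  intro ct' h1' h0' x y
  have htr' : ∀ z : AdjoinRoot f, LinearMap.trace k (AdjoinRoot f) (LinearMap.mulLeft k z)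
      = ct' (aeval θ' (derivative P') * z) :=
    fun z => trace_mulLeft_eq_ct hn θ' hP'monic hP'deg hrootP' b' hb' ct' h1' h0' z
  have key := (htr' (Ring.inverse (aeval θ' (derivative P')) * (x * y))).symm.trans
    (htrθ (Ring.inverse (aeval θ' (derivative P')) * (x * y)))
  rw [show aeval θ' (derivative P') * (Ring.inverse (aeval θ' (derivative P')) * (x * y))
      = (aeval θ' (derivative P') * Ring.inverse (aeval θ' (derivative P'))) * (x * y) by ring,
    Ring.mul_inverse_cancel _ hvunit, one_mul] at key
  rw [key]
  congr 1
  ring
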